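/- Let H(z,w) = (z², √2·zw, w²) and γ ∈ ℂ. The pushforward of the sphere vector field S₂(z,w) = (−conj(γ)·w, γ·z) by H equals the restriction along H of the linear vector field V'(z₁,z₂,z₃) = (−√2·conj(γ)·z₂, √2·γ·z₁ − √2·conj(γ)·z₃, √2·γ·z₂) on ℂ³; that is, DH(z,w)·S₂(z,w) = V'(H(z,w)) for all (z,w) ∈ ℂ². Moreover V' is an infinitesimal automorphism of S⁵, i.e., Re⟨V'(Z), Z⟩ = 0 for all Z ∈ ℂ³. -/

import Mathlib

open ComplexConjugate

theorem stmt_11 (γ : ℂ) :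
    (∀ z w : ℂ,
      fderiv ℂ (fun p : ℂ × ℂ => (p.1 ^ 2, (Real.sqrt 2 : ℂ) * p.1 * p.2, p.2 ^ 2))
          (z, w) (-(conj γ) * w, γ * z)
        = (fun Z : ℂ × ℂ × ℂ =>
            (-(Real.sqrt 2 : ℂ) * conj γ * Z.2.1,
              (Real.sqrt 2 : ℂ) * γ * Z.1 - (Real.sqrt 2 : ℂ) * conj γ * Z.2.2,
              (Real.sqrt 2 : ℂ) * γ * Z.2.1))
            (z ^ 2, (Real.sqrt 2 : ℂ) * z * w, w ^ 2)) ∧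
    (∀ Z : ℂ × ℂ × ℂ,
      ((-(Real.sqrt 2 : ℂ) * conj γ * Z.2.1) * conj Z.1
        + ((Real.sqrt 2 : ℂ) * γ * Z.1 - (Real.sqrt 2 : ℂ) * conj γ * Z.2.2) * conj Z.2.1
        + ((Real.sqrt 2 : ℂ) * γ * Z.2.1) * conj Z.2.2).re = 0) := by
  constructor
  · intro z w
    simp only [pow_two]
    have h1 : HasFDerivAt (fun p : ℂ × ℂ => p.1 * p.1) _ (z, w) :=
      (hasFDerivAt_fst : HasFDerivAt _ (ContinuousLinearMap.fst ℂ ℂ ℂ) (z, w)).mul (hasFDerivAt_fst : HasFDerivAt _ (ContinuousLinearMap.fst ℂ ℂ ℂ) (z, w))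
    have h2 : HasFDerivAt (fun p : ℂ × ℂ => (Real.sqrt 2 : ℂ) * p.1 * p.2) _ (z, w) :=
      (((hasFDerivAt_fst : HasFDerivAt _ (ContinuousLinearMap.fst ℂ ℂ ℂ) (z, w)).const_mul (Real.sqrt 2 : ℂ)).mul
        (hasFDerivAt_snd : HasFDerivAt _ (ContinuousLinearMap.snd ℂ ℂ ℂ) (z, w)))
    have h3 : HasFDerivAt (fun p : ℂ × ℂ => p.2 * p.2) _ (z, w) :=
      (hasFDerivAt_snd : HasFDerivAt _ (ContinuousLinearMap.snd ℂ ℂ ℂ) (z, w)).mul (hasFDerivAt_snd : HasFDerivAt _ (ContinuousLinearMap.snd ℂ ℂ ℂ) (z, w))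
    have h := (HasFDerivAt.prodMk h1 (HasFDerivAt.prodMk h2 h3)).fderiv
    rw [h]
    have hs : ((Real.sqrt 2 : ℝ) : ℂ) ^ 2 = 2 := by
      norm_cast
      rw [Real.sq_sqrt] <;> norm_num
    simp [ContinuousLinearMap.smul_apply, Prod.ext_iff]
    refine ⟨by linear_combination (z * conj γ * w) * hs, by ring, by linear_combination (-(w * γ * z)) * hs⟩
  · intro Z
    simp [Complex.add_re, Complex.sub_re, Complex.mul_re, Complex.mul_im,
      Complex.conj_re, Complex.conj_im]
    ring
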